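/- Let P ⊂ ℝⁿ be a compact convex set containing 0 in its interior. Then there exists a ∈ ℝⁿ such that ∫_P x e^{a·x} dx = 0 (the vector-valued integral vanishes). -/

import Mathlib

set_option synthInstance.maxHeartbeats 1000000
set_option maxHeartbeats 1000000


open MeasureTheory RealInnerProductSpace Metric

section TianZhuAux

variable {n : ℕ}

local notation "E" => EuclideanSpace ℝ (Fin n)

private lemma tz_contE (a : E) : Continuous fun x : E => Real.exp ⟪a, x⟫ :=
  Real.continuous_exp.comp (continuous_const.inner continuous_id)

private lemma tz_intOn_exp {P : Set E} (hPc : IsCompact P) (a : E) :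
    IntegrableOn (fun x => Real.exp ⟪a, x⟫) P :=
  (tz_contE a).continuousOn.integrableOn_compact hPc

private lemma tz_intOn_smul {P : Set E} (hPc : IsCompact P) (a : E) :
    IntegrableOn (fun x => Real.exp ⟪a, x⟫ • x) P :=
  ((tz_contE a).smul continuous_id).continuousOn.integrableOn_compact hPc

private lemma tz_intOn_sl {P : Set E} (hPc : IsCompact P) (a : E) :
    IntegrableOn (fun x => Real.exp ⟪a, x⟫ • (innerSL ℝ x : E →L[ℝ] ℝ)) P :=
  ((tz_contE a).smul (innerSL ℝ).continuous).continuousOn.integrableOn_compact hPc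

private lemma tz_hasFDeriv {P : Set E} (hPc : IsCompact P) (a₀ : E) :
    HasFDerivAt (fun a : E => ∫ x in P, Real.exp ⟪a, x⟫)
      (∫ x in P, Real.exp ⟪a₀, x⟫ • (innerSL ℝ x : E →L[ℝ] ℝ)) a₀ := by
  obtain ⟨R, hR⟩ := hPc.isBounded.subset_closedBall 0
  have hRx : ∀ x ∈ P, ‖x‖ ≤ |R| := fun x hx => by
    have := hR hx
    simp only [mem_closedBall, dist_zero_right] at this
    exact this.trans (le_abs_self R)
  have hPm : MeasurableSet P := hPc.measurableSet
  apply hasFDerivAt_integral_of_dominated_of_fderiv_le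
    (𝕜 := ℝ) (μ := volume.restrict P)
    (F := fun (a : E) (x : E) => Real.exp ⟪a, x⟫)
    (F' := fun (a : E) (x : E) => Real.exp ⟪a, x⟫ • (innerSL ℝ x : E →L[ℝ] ℝ))
    (x₀ := a₀)
    (bound := fun _ => Real.exp ((‖a₀‖ + 1) * |R|) * |R|) (s := ball a₀ 1) (ball_mem_nhds a₀ one_pos)
  · exact Filter.Eventually.of_forall fun a => (tz_contE a).aestronglyMeasurable
  · exact tz_intOn_exp hPc a₀
  · exact (((tz_contE a₀).smul (innerSL ℝ).continuous)).aestronglyMeasurable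
  · refine (ae_restrict_iff' hPm).2 (Filter.Eventually.of_forall fun x hx => ?_)
    intro a ha
    have hax : ⟪a, x⟫ ≤ (‖a₀‖ + 1) * |R| := by
      calc ⟪a, x⟫ ≤ ‖a‖ * ‖x‖ := real_inner_le_norm a x
        _ ≤ (‖a₀‖ + 1) * |R| := by
            apply mul_le_mul _ (hRx x hx) (norm_nonneg x) (by positivity)
            have h' : ‖a - a₀‖ < 1 := by simpa [dist_eq_norm] using ha
            have h'' := norm_sub_norm_le a a₀
            linarith
    have hns : ‖Real.exp ⟪a, x⟫ • (innerSL ℝ x : E →L[ℝ] ℝ)‖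
        = Real.exp ⟪a, x⟫ * ‖x‖ := by
      rw [norm_smul (Real.exp ⟪a, x⟫) (innerSL ℝ x), innerSL_apply_norm,
        Real.norm_eq_abs, abs_of_pos (Real.exp_pos _)]
    rw [hns]
    exact mul_le_mul (Real.exp_le_exp.2 hax) (hRx x hx) (norm_nonneg x)
      (Real.exp_pos _).le
  · rw [integrable_const_iff]
    right
    rw [isFiniteMeasure_restrict]
    exact hPc.measure_lt_top.ne
  · refine (ae_restrict_iff' hPm).2 (Filter.Eventually.of_forall fun x _ => ?_)
    intro a _
    have h1 : HasFDerivAt (fun a : E => Real.exp ((innerSL ℝ x) a))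
        (Real.exp ((innerSL ℝ x) a) • (innerSL ℝ x : E →L[ℝ] ℝ)) a :=
      (innerSL ℝ x).hasFDerivAt.exp
    have h2 : (fun a : E => Real.exp ((innerSL ℝ x) a))
        = fun a : E => Real.exp ⟪a, x⟫ := by
      funext b; rw [innerSL_apply_apply, real_inner_comm]
    rw [h2] at h1
    rwa [show ((innerSL ℝ x) a : ℝ) = ⟪a, x⟫ by
      rw [innerSL_apply_apply, real_inner_comm]] at h1

private lemma tz_lower {P : Set E} (hPc : IsCompact P) {ε : ℝ} (hε : 0 < ε)
    (hball : closedBall (0 : E) ε ⊆ P) {a : E} (ha : a ≠ 0) :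
    (volume (closedBall (0 : E) (ε / 4))).toReal * Real.exp (ε / 2 * ‖a‖)
      ≤ ∫ x in P, Real.exp ⟪a, x⟫ := by
  have hna : (0 : ℝ) < ‖a‖ := norm_pos_iff.2 ha
  set u : E := ‖a‖⁻¹ • a with hu_def
  have hu_norm : ‖u‖ = 1 := by
    rw [hu_def, norm_smul, norm_inv, norm_norm, inv_mul_cancel₀ hna.ne']
  have hau : ⟪a, u⟫ = ‖a‖ := by
    rw [hu_def, real_inner_smul_right, real_inner_self_eq_norm_mul_norm]
    field_simp
  set c : E := (3 * ε / 4) • u with hc_def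
  have hc_norm : ‖c‖ = 3 * ε / 4 := by
    rw [hc_def, norm_smul, hu_norm, mul_one, Real.norm_eq_abs]
    rw [abs_of_pos (by positivity)]
  have hac : ⟪a, c⟫ = 3 * ε / 4 * ‖a‖ := by
    rw [hc_def, real_inner_smul_right, hau]
  have hBP : closedBall c (ε / 4) ⊆ P := by
    intro x hx
    apply hball
    simp only [mem_closedBall, dist_zero_right]
    have h1 : dist x c ≤ ε / 4 := hx
    rw [dist_eq_norm] at h1
    have h2 := norm_sub_norm_le x c
    linarith [hc_norm.le, hc_norm.ge]
  have hlow : ∀ x ∈ closedBall c (ε / 4), ε / 2 * ‖a‖ ≤ ⟪a, x⟫ := by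
    intro x hx
    have hdist : ‖c - x‖ ≤ ε / 4 := by
      have : dist x c ≤ ε / 4 := hx
      rwa [dist_eq_norm, ← norm_neg, neg_sub] at this
    have h1 : ⟪a, c - x⟫ ≤ ‖a‖ * (ε / 4) :=
      (real_inner_le_norm a (c - x)).trans
        (mul_le_mul_of_nonneg_left hdist hna.le)
    have h2 : ⟪a, x⟫ = ⟪a, c⟫ - ⟪a, c - x⟫ := by
      rw [inner_sub_right]; ring
    rw [h2, hac]
    nlinarith
  have hmeas : MeasurableSet (closedBall c (ε / 4)) := measurableSet_closedBall
  have hint1 : IntegrableOn (fun x => Real.exp ⟪a, x⟫) (closedBall c (ε / 4)) :=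
    (tz_intOn_exp hPc a).mono_set hBP
  have step1 : ∫ x in closedBall c (ε / 4), Real.exp (ε / 2 * ‖a‖)
      ≤ ∫ x in closedBall c (ε / 4), Real.exp ⟪a, x⟫ := by
    apply setIntegral_mono_on _ hint1 hmeas
    · intro x hx
      exact Real.exp_le_exp.2 (hlow x hx)
    · rw [integrableOn_const_iff]
      right
      exact (isCompact_closedBall _ _).measure_lt_top
  have step2 : ∫ x in closedBall c (ε / 4), Real.exp ⟪a, x⟫
      ≤ ∫ x in P, Real.exp ⟪a, x⟫ := by
    apply setIntegral_mono_set (tz_intOn_exp hPc a)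
    · exact Filter.Eventually.of_forall fun x => (Real.exp_pos _).le
    · exact Filter.Eventually.of_forall hBP
  have hvol : ∫ x in closedBall c (ε / 4), Real.exp (ε / 2 * ‖a‖)
      = (volume (closedBall (0 : E) (ε / 4))).toReal * Real.exp (ε / 2 * ‖a‖) := by
    rw [setIntegral_const, measureReal_def, Measure.addHaar_closedBall_center, smul_eq_mul]
  linarith [hvol ▸ step1, step2]

end TianZhuAux

/-- Tian–Zhu: for a compact convex `P ⊂ ℝⁿ` with `0` in its interior, there exists
`a ∈ ℝⁿ` with `∫_P x e^{a·x} dx = 0`. -/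
theorem stmt_7 (n : ℕ) (P : Set (EuclideanSpace ℝ (Fin n)))
    (hPc : IsCompact P) (hPconv : Convex ℝ P)
    (hPint : (0 : EuclideanSpace ℝ (Fin n)) ∈ interior P) :
    ∃ a : EuclideanSpace ℝ (Fin n),
      ∫ x in P, Real.exp ⟪a, x⟫ • x = (0 : EuclideanSpace ℝ (Fin n)) := by
  classical
  -- the function to minimize
  set F : EuclideanSpace ℝ (Fin n) → ℝ := fun a => ∫ x in P, Real.exp ⟪a, x⟫ with hF_def
  have hdiff : ∀ a : EuclideanSpace ℝ (Fin n), HasFDerivAt F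
      (∫ x in P, Real.exp ⟪a, x⟫ •
        (innerSL ℝ x : EuclideanSpace ℝ (Fin n) →L[ℝ] ℝ)) a :=
    fun a => tz_hasFDeriv hPc a
  have hcont : Continuous F :=
    continuous_iff_continuousAt.2 fun a => (hdiff a).continuousAt
  -- a closed ball inside P
  obtain ⟨δ, hδ, hδP⟩ := Metric.mem_nhds_iff.1 (mem_interior_iff_mem_nhds.1 hPint)
  set ε : ℝ := δ / 2 with hε_def
  have hε : 0 < ε := by rw [hε_def]; positivity
  have hball : Metric.closedBall (0 : EuclideanSpace ℝ (Fin n)) ε ⊆ P :=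
    (Metric.closedBall_subset_ball (by rw [hε_def]; linarith)).trans hδP
  -- positive constant
  set c' : ℝ := (volume (Metric.closedBall (0 : EuclideanSpace ℝ (Fin n)) (ε / 4))).toReal with hc'_def
  have hc'pos : 0 < c' := by
    apply ENNReal.toReal_pos
    · refine ne_of_gt (lt_of_lt_of_le (measure_ball_pos volume (0 : EuclideanSpace ℝ (Fin n)) (by positivity : (0:ℝ) < ε / 4)) ?_)
      exact measure_mono Metric.ball_subset_closedBall
    · exact (isCompact_closedBall _ _).measure_lt_top.ne
  -- threshold
  have hF0 : 0 ≤ F 0 :=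
    setIntegral_nonneg hPc.measurableSet fun x _ => (Real.exp_pos _).le
  set M : ℝ := 2 / ε * Real.log ((F 0 + 1) / c') with hM_def
  have hkey : ∀ a : EuclideanSpace ℝ (Fin n), a ≠ 0 → M < ‖a‖ → F 0 < F a := by
    intro a ha haM
    have h1 : c' * Real.exp (ε / 2 * ‖a‖) ≤ F a := tz_lower hPc hε hball ha
    have h2 : (F 0 + 1) / c' ≤ Real.exp (ε / 2 * ‖a‖) := by
      have hlog : Real.log ((F 0 + 1) / c') ≤ ε / 2 * ‖a‖ := by
        have hlm : ε / 2 * M = Real.log ((F 0 + 1) / c') := by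
          rw [hM_def]
          field_simp
        rw [← hlm]
        have := haM.le
        nlinarith
      calc (F 0 + 1) / c' = Real.exp (Real.log ((F 0 + 1) / c')) := by
            rw [Real.exp_log (by positivity)]
        _ ≤ Real.exp (ε / 2 * ‖a‖) := Real.exp_le_exp.2 hlog
    have h3 : F 0 + 1 ≤ c' * Real.exp (ε / 2 * ‖a‖) := by
      have := mul_le_mul_of_nonneg_left h2 hc'pos.le
      rwa [mul_div_cancel₀ _ hc'pos.ne'] at this
    linarith
  -- minimize F over a big closed ball
  set K : Set (EuclideanSpace ℝ (Fin n)) := Metric.closedBall 0 (|M| + 1) with hK_def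
  have hK0 : (0 : EuclideanSpace ℝ (Fin n)) ∈ K := by
    simp only [hK_def, Metric.mem_closedBall, dist_self]
    positivity
  obtain ⟨a₀, ha₀K, ha₀min⟩ :=
    (isCompact_closedBall (0 : EuclideanSpace ℝ (Fin n)) (|M| + 1)).exists_isMinOn ⟨0, hK0⟩
      hcont.continuousOn
  have hglobal : IsMinOn F Set.univ a₀ := by
    intro a _
    by_cases haK : a ∈ K
    · exact ha₀min haK
    · have hnorm : |M| + 1 < ‖a‖ := by
        simpa [hK_def, Metric.mem_closedBall, dist_zero_right, not_le] using haK
      have ha : a ≠ 0 := by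
        intro h
        rw [h, norm_zero] at hnorm
        have : (0:ℝ) ≤ |M| := abs_nonneg M
        linarith
      have : F 0 < F a := hkey a ha (lt_of_le_of_lt (by linarith [le_abs_self M]) hnorm)
      exact le_of_lt (lt_of_le_of_lt (ha₀min hK0) this)
  have hlocal : IsLocalMin F a₀ := hglobal.isLocalMin Filter.univ_mem
  have hzero : (∫ x in P, Real.exp ⟪a₀, x⟫ •
      (innerSL ℝ x : EuclideanSpace ℝ (Fin n) →L[ℝ] ℝ)) = 0 :=
    hlocal.hasFDerivAt_eq_zero (hdiff a₀)
  refine ⟨a₀, ?_⟩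
  set V : EuclideanSpace ℝ (Fin n) := ∫ x in P, Real.exp ⟪a₀, x⟫ • x with hV_def
  have hVV : ⟪V, V⟫ = 0 := by
    have h1 : (∫ x in P, ⟪V, Real.exp ⟪a₀, x⟫ • x⟫) = ⟪V, V⟫ :=
      integral_inner (tz_intOn_smul hPc a₀) V
    have h2 : (∫ x in P, Real.exp ⟪a₀, x⟫ •
          (innerSL ℝ x : EuclideanSpace ℝ (Fin n) →L[ℝ] ℝ)) V
        = ∫ x in P, (Real.exp ⟪a₀, x⟫ •
          (innerSL ℝ x : EuclideanSpace ℝ (Fin n) →L[ℝ] ℝ)) V :=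
      ContinuousLinearMap.integral_apply (tz_intOn_sl hPc a₀) V
    have h3 : (∫ x in P, ⟪V, Real.exp ⟪a₀, x⟫ • x⟫)
        = ∫ x in P, (Real.exp ⟪a₀, x⟫ •
          (innerSL ℝ x : EuclideanSpace ℝ (Fin n) →L[ℝ] ℝ)) V := by
      apply setIntegral_congr_fun hPc.measurableSet
      intro x _
      simp only [real_inner_smul_right, ContinuousLinearMap.smul_apply,
        innerSL_apply_apply, smul_eq_mul]
      rw [real_inner_comm V x]
    rw [← h1, h3, ← h2, hzero, ContinuousLinearMap.zero_apply]
  exact inner_self_eq_zero.1 hVV
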